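/- Let α₁,…,α_N > 0, H > 0, η > 0, and β > 0 with ∑ᵢ αᵢ > βH. Then for every k ∈ ℕ, the integral ∫_{ℝ^N} exp(−k^{1/∑αᵢ} ‖y‖_α) / ‖y‖_α^{βH} dy is finite and equals C · k^{βH/∑αᵢ − 1}, where C = C(N, α, β, H) > 0 is independent of k and ‖y‖_α = ∑ᵢ |yᵢ|^{1/αᵢ}. -/

import Mathlib

open MeasureTheory Real Set

lemma aux_int1d {p θ : ℝ} (hp : 0 < p) (hθ1 : θ < 1) :
    Integrable (fun t : ℝ => |t| ^ (-θ) * Real.exp (-|t| ^ p)) := by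
  have hIoi : IntegrableOn (fun x : ℝ => |x| ^ (-θ) * Real.exp (-|x| ^ p)) (Ioi 0) := by
    have hs : 0 < (1 - θ) / p := div_pos (by linarith) hp
    have h0 : IntegrableOn (fun x : ℝ => Real.exp (-x) * x ^ ((1 - θ) / p - 1)) (Ioi 0) :=
      Real.GammaIntegral_convergent hs
    have h1 := (integrableOn_Ioi_comp_rpow_iff'
      (fun x : ℝ => Real.exp (-x) * x ^ ((1 - θ) / p - 1)) hp.ne').mpr h0
    refine h1.congr_fun (fun x hx => ?_) measurableSet_Ioi
    have hx0 : (0:ℝ) < x := hx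
    have habs : |x| = x := abs_of_pos hx0
    dsimp only
    rw [smul_eq_mul, habs, ← Real.rpow_mul hx0.le,
      show x ^ (p - 1) * (Real.exp (-x ^ p) * x ^ (p * ((1 - θ) / p - 1)))
        = x ^ (p - 1) * x ^ (p * ((1 - θ) / p - 1)) * Real.exp (-x ^ p) by ring,
      ← Real.rpow_add hx0]
    congr 2
    field_simp
    ring
  have hIic : IntegrableOn (fun x : ℝ => |x| ^ (-θ) * Real.exp (-|x| ^ p)) (Iic 0) := by
    rw [← Measure.map_neg_eq_self (volume : Measure ℝ)]
    have m : MeasurableEmbedding fun x : ℝ => -x := (Homeomorph.neg ℝ).measurableEmbedding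
    rw [m.integrableOn_map_iff]
    simp_rw [Function.comp_def, abs_neg, neg_preimage, neg_Iic, neg_zero]
    exact (integrableOn_Ici_iff_integrableOn_Ioi).mpr hIoi
  rw [← integrableOn_univ, ← Iic_union_Ioi (a := (0:ℝ))]
  exact hIic.union hIoi

lemma aux_scale {N : ℕ} (d : Fin N → ℝ) (hd : ∀ i, 0 < d i) {F : (Fin N → ℝ) → ℝ}
    (hF : Measurable F) :
    ∫ y : Fin N → ℝ, F (fun i => d i * y i) = (∏ i, d i)⁻¹ * ∫ y, F y := by
  set T : (Fin N → ℝ) →ₗ[ℝ] (Fin N → ℝ) := Matrix.toLin' (Matrix.diagonal d)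
  have hdet : LinearMap.det T = ∏ i, d i := by
    rw [LinearMap.det_toLin', Matrix.det_diagonal]
  have hprod : (0:ℝ) < ∏ i, d i := Finset.prod_pos (fun i _ => hd i)
  have hdet0 : LinearMap.det T ≠ 0 := by rw [hdet]; exact hprod.ne'
  have happ : ∀ y : Fin N → ℝ, T y = fun i => d i * y i := by
    intro y
    funext i
    simp [T, Matrix.toLin'_apply, Matrix.mulVec_diagonal]
  have hTmeas : Measurable T := T.continuous_of_finiteDimensional.measurable
  have hmap := Measure.map_linearMap_addHaar_eq_smul_addHaar
    (volume : Measure (Fin N → ℝ)) hdet0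
  calc ∫ y : Fin N → ℝ, F (fun i => d i * y i)
      = ∫ y : Fin N → ℝ, F (T y) := by simp_rw [happ]
    _ = ∫ z, F z ∂(Measure.map T volume) :=
        (integral_map hTmeas.aemeasurable hF.aestronglyMeasurable).symm
    _ = ∫ z, F z ∂(ENNReal.ofReal |(LinearMap.det T)⁻¹| • volume) := by rw [hmap]
    _ = (∏ i, d i)⁻¹ * ∫ y, F y := by
        rw [integral_smul_measure, ENNReal.toReal_ofReal (abs_nonneg _), hdet,
          abs_of_pos (inv_pos.mpr hprod), smul_eq_mul]

theorem stmt18 (N : ℕ) (hN : 0 < N) (α : Fin N → ℝ) (hα : ∀ i, 0 < α i)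
    (H β η : ℝ) (hH : 0 < H) (hβ : 0 < β) (hη : 0 < η)
    (hsum : β * H < ∑ i, α i) :
    ∃ C : ℝ, 0 < C ∧ ∀ k : ℕ, 0 < k →
      Integrable (fun y : Fin N → ℝ =>
        Real.exp (-((k : ℝ) ^ (1 / ∑ i, α i)) * ∑ i, |y i| ^ (1 / α i)) /
          (∑ i, |y i| ^ (1 / α i)) ^ (β * H)) volume ∧
      (∫ y : Fin N → ℝ,
        Real.exp (-((k : ℝ) ^ (1 / ∑ i, α i)) * ∑ i, |y i| ^ (1 / α i)) /
          (∑ i, |y i| ^ (1 / α i)) ^ (β * H)) =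
        C * (k : ℝ) ^ (β * H / (∑ i, α i) - 1) := by
  have hNe : Nonempty (Fin N) := Fin.pos_iff_nonempty.mp hN
  set A := ∑ i, α i with hAdef
  have hA : 0 < A := Finset.sum_pos (fun i _ => hα i) Finset.univ_nonempty
  set θ := β * H / A with hθdef
  have hθ0 : 0 < θ := div_pos (mul_pos hβ hH) hA
  have hθ1 : θ < 1 := (div_lt_one hA).mpr hsum
  have hβH : β * H = θ * A := by rw [hθdef]; field_simp
  -- basic facts about S y = ∑ |y i| ^ (1/α i)
  have hS0 : ∀ y : Fin N → ℝ, 0 ≤ ∑ i, |y i| ^ (1 / α i) :=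
    fun y => Finset.sum_nonneg fun i _ => rpow_nonneg (abs_nonneg _) _
  have hScont : Continuous (fun y : Fin N → ℝ => ∑ i, |y i| ^ (1 / α i)) := by
    refine continuous_finset_sum _ fun i _ => ?_
    exact (continuous_abs.comp (continuous_apply i)).rpow_const
      (fun x => Or.inr (one_div_nonneg.mpr (hα i).le))
  have hSmeas : Measurable (fun y : Fin N → ℝ => ∑ i, |y i| ^ (1 / α i)) := hScont.measurable
  have hFmeas : ∀ c : ℝ, Measurable (fun y : Fin N → ℝ =>
      Real.exp (-c * ∑ i, |y i| ^ (1 / α i)) / (∑ i, |y i| ^ (1 / α i)) ^ (β * H)) :=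
    fun c => ((hSmeas.const_mul (-c)).exp).div
      ((hScont.rpow_const fun x => Or.inr (mul_pos hβ hH).le).measurable)
  have hFnonneg : ∀ c : ℝ, ∀ y : Fin N → ℝ, 0 ≤
      Real.exp (-c * ∑ i, |y i| ^ (1 / α i)) / (∑ i, |y i| ^ (1 / α i)) ^ (β * H) :=
    fun c y => div_nonneg (Real.exp_nonneg _) (rpow_nonneg (hS0 y) _)
  -- integrability of the c = 1 integrand
  have hgint : Integrable (fun y : Fin N → ℝ =>
      ∏ i, (|y i| ^ (-θ) * Real.exp (-|y i| ^ (1 / α i)))) :=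
    Integrable.fintype_prod fun i => aux_int1d (one_div_pos.mpr (hα i)) hθ1
  have hae : ∀ᵐ y : Fin N → ℝ, ∀ i, y i ≠ 0 := by
    rw [ae_all_iff]
    intro i
    rw [volume_pi]
    exact Measure.ae_eval_ne _ i 0
  have hF1int : Integrable (fun y : Fin N → ℝ =>
      Real.exp (-(∑ i, |y i| ^ (1 / α i))) / (∑ i, |y i| ^ (1 / α i)) ^ (β * H)) := by
    refine hgint.mono' ?_ ?_
    · have := hFmeas 1
      simpa using this.aestronglyMeasurable
    · filter_upwards [hae] with y hy
      have hterm : ∀ i, 0 < |y i| ^ (1 / α i) :=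
        fun i => rpow_pos_of_pos (abs_pos.mpr (hy i)) _
      have hSy : 0 < ∑ i, |y i| ^ (1 / α i) :=
        Finset.sum_pos (fun i _ => hterm i) Finset.univ_nonempty
      rw [Real.norm_eq_abs, abs_of_nonneg (by
        exact div_nonneg (Real.exp_nonneg _) (rpow_nonneg (hS0 y) _))]
      have hexp : Real.exp (-(∑ i, |y i| ^ (1 / α i)))
          = ∏ i, Real.exp (-(|y i| ^ (1 / α i))) := by
        rw [← Real.exp_sum, ← Finset.sum_neg_distrib]
      have hden : (∏ i, |y i| ^ θ) ≤ (∑ i, |y i| ^ (1 / α i)) ^ (β * H) := by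
        have h1 : (∑ i, |y i| ^ (1 / α i)) ^ (β * H)
            = ∏ i, (∑ j, |y j| ^ (1 / α j)) ^ (θ * α i) := by
          rw [hβH, show θ * A = ∑ i, θ * α i by rw [hAdef, Finset.mul_sum],
            Real.rpow_sum_of_pos hSy]
        rw [h1]
        refine Finset.prod_le_prod (fun i _ => rpow_nonneg (abs_nonneg _) _) (fun i _ => ?_)
        have h2 : (|y i| ^ (1 / α i)) ^ (θ * α i) ≤
            (∑ j, |y j| ^ (1 / α j)) ^ (θ * α i) :=
          Real.rpow_le_rpow (hterm i).le
            (Finset.single_le_sum (fun j _ => (hterm j).le) (Finset.mem_univ i))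
            (mul_nonneg hθ0.le (hα i).le)
        refine le_trans (le_of_eq ?_) h2
        rw [← Real.rpow_mul (abs_nonneg _)]
        congr 1
        field_simp
        rw [div_self (hα i).ne']
      have hprodpos : 0 < ∏ i, |y i| ^ θ :=
        Finset.prod_pos fun i _ => rpow_pos_of_pos (abs_pos.mpr (hy i)) _
      calc Real.exp (-(∑ i, |y i| ^ (1 / α i))) / (∑ i, |y i| ^ (1 / α i)) ^ (β * H)
          ≤ Real.exp (-(∑ i, |y i| ^ (1 / α i))) / ∏ i, |y i| ^ θ := by
            gcongr
        _ = ∏ i, (|y i| ^ (-θ) * Real.exp (-|y i| ^ (1 / α i))) := by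
            rw [hexp, ← Finset.prod_div_distrib]
            refine Finset.prod_congr rfl fun i _ => ?_
            rw [div_eq_mul_inv, ← Real.rpow_neg (abs_nonneg _), mul_comm]
  -- the constant
  refine ⟨∫ y : Fin N → ℝ,
      Real.exp (-(∑ i, |y i| ^ (1 / α i))) / (∑ i, |y i| ^ (1 / α i)) ^ (β * H), ?_, ?_⟩
  · rw [integral_pos_iff_support_of_nonneg_ae
      (Filter.Eventually.of_forall fun y => div_nonneg (Real.exp_nonneg _) (rpow_nonneg (hS0 y) _))
      hF1int]
    set i₀ : Fin N := Classical.arbitrary (Fin N)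
    have hsub : ((fun y : Fin N → ℝ => y i₀) ⁻¹' ({0}ᶜ)) ⊆
        Function.support (fun y : Fin N → ℝ =>
          Real.exp (-(∑ i, |y i| ^ (1 / α i))) / (∑ i, |y i| ^ (1 / α i)) ^ (β * H)) := by
      intro y hy
      have hSy : 0 < ∑ i, |y i| ^ (1 / α i) :=
        lt_of_lt_of_le (rpow_pos_of_pos (abs_pos.mpr hy) _)
          (Finset.single_le_sum (fun j _ => rpow_nonneg (abs_nonneg _) _) (Finset.mem_univ i₀))
      exact ne_of_gt (div_pos (Real.exp_pos _) (rpow_pos_of_pos hSy _))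
    refine lt_of_lt_of_le ?_ (measure_mono hsub)
    refine ((isOpen_compl_singleton.preimage (continuous_apply i₀))).measure_pos volume ?_
    exact ⟨fun _ => 1, by simp⟩
  · intro k hk
    have hk1 : (1:ℝ) ≤ (k:ℝ) := by exact_mod_cast hk
    set c : ℝ := (k:ℝ) ^ (1 / A) with hcdef
    have hc0 : 0 < c := rpow_pos_of_pos (by linarith) _
    have hc1 : 1 ≤ c := Real.one_le_rpow hk1 (by positivity)
    constructor
    · refine hF1int.mono' (hFmeas c).aestronglyMeasurable ?_
      filter_upwards with y
      rw [Real.norm_eq_abs, abs_of_nonneg (hFnonneg c y)]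
      rw [div_eq_mul_inv, div_eq_mul_inv]
      refine mul_le_mul_of_nonneg_right ?_ (by positivity)
      refine Real.exp_le_exp.mpr ?_
      rw [neg_mul, neg_le_neg_iff]
      exact le_mul_of_one_le_left (hS0 y) hc1
    · -- change of variables
      have hptwise : ∀ y : Fin N → ℝ,
          Real.exp (-c * ∑ i, |(c ^ (-α i)) * y i| ^ (1 / α i)) /
            (∑ i, |(c ^ (-α i)) * y i| ^ (1 / α i)) ^ (β * H)
          = c ^ (β * H) *
            (Real.exp (-(∑ i, |y i| ^ (1 / α i))) / (∑ i, |y i| ^ (1 / α i)) ^ (β * H)) := by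
        intro y
        have hSs : (∑ i, |(c ^ (-α i)) * y i| ^ (1 / α i))
            = c⁻¹ * ∑ i, |y i| ^ (1 / α i) := by
          rw [Finset.mul_sum]
          refine Finset.sum_congr rfl fun i _ => ?_
          rw [abs_mul, abs_of_pos (rpow_pos_of_pos hc0 _),
            Real.mul_rpow (rpow_pos_of_pos hc0 _).le (abs_nonneg _),
            ← Real.rpow_mul hc0.le,
            show -α i * (1 / α i) = -1 by rw [mul_one_div, neg_div, div_self (hα i).ne'], Real.rpow_neg_one]
        rw [hSs, show -c * (c⁻¹ * ∑ i, |y i| ^ (1 / α i)) = -(∑ i, |y i| ^ (1 / α i)) by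
            rw [neg_mul, ← mul_assoc, mul_inv_cancel₀ hc0.ne', one_mul],
          Real.mul_rpow (inv_nonneg.mpr hc0.le) (hS0 y),
          show ∀ a b d : ℝ, a / (b * d) = b⁻¹ * (a / d) by
            intro a b d; rw [div_eq_mul_inv, div_eq_mul_inv, mul_inv]; ring,
          Real.inv_rpow hc0.le, inv_inv]
      have hscale := aux_scale (fun i => c ^ (-α i))
        (fun i => rpow_pos_of_pos hc0 _) (hFmeas c)
      simp only [hptwise] at hscale
      rw [integral_const_mul] at hscale
      have hprodc : (∏ i, c ^ (-α i)) = c ^ (-A) := by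
        rw [hAdef, ← Real.rpow_sum_of_pos hc0, Finset.sum_neg_distrib]
      rw [hprodc] at hscale
      -- hscale : c ^ (β*H) * C = (c ^ (-A))⁻¹ * ∫ Fc c
      have hint : (∫ y : Fin N → ℝ,
          Real.exp (-c * ∑ i, |y i| ^ (1 / α i)) / (∑ i, |y i| ^ (1 / α i)) ^ (β * H))
          = c ^ (-A) * (c ^ (β * H) *
            ∫ y : Fin N → ℝ,
              Real.exp (-(∑ i, |y i| ^ (1 / α i))) / (∑ i, |y i| ^ (1 / α i)) ^ (β * H)) := by
        rw [hscale, ← mul_assoc, mul_inv_cancel₀ (rpow_pos_of_pos hc0 (-A)).ne', one_mul]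
      rw [hint, ← mul_assoc, ← Real.rpow_add hc0, hcdef,
        ← Real.rpow_mul (Nat.cast_nonneg k),
        show 1 / A * (-A + β * H) = θ - 1 by rw [hθdef]; field_simp; ring,
        mul_comm]
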